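/- arXiv:cs/0701058 — 3 statements merged into one kernel-verified Lean document; each statement's English description precedes it below -/
import Mathlib

section
/- Let s₁,...,s_N be i.i.d. random vectors uniformly distributed over a compact set R ⊂ R^M with positive Lebesgue measure λ(R), and let γ_{r,N} = min_{1≤i≤N} ‖sᵢ‖^r with 0 assumed to lie in R. Then lim_{N→∞} E[N^(r/M) γ_{r,N}] = B_M^(-r/M) Γ(1 + r/M) λ(R)^(r/M), where B_M = π^(M/2)/Γ(1+M/2) is the volume of the unit ball in R^M. -/
open MeasureTheory ProbabilityTheory Filter Real

open scoped ENNReal Topology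
open Set

lemma aux_inf_lt {N : ℕ} (hN : 0 < N) (f : Fin N → ℝ) (a : ℝ) :
    a < ⨅ i, f i ↔ ∀ i, a < f i := by
  haveI : Nonempty (Fin N) := Fin.pos_iff_nonempty.mp hN
  rw [← Finset.inf'_univ_eq_ciInf, Finset.lt_inf'_iff]
  simp

lemma aux_cb_volume (M : ℕ) (hM : 0 < M) (ρ : ℝ) (hρ : 0 ≤ ρ) :
    volume (Metric.closedBall (0 : EuclideanSpace ℝ (Fin M)) ρ) =
      ENNReal.ofReal ((π ^ ((M : ℝ) / 2) / Real.Gamma (1 + M / 2)) * ρ ^ M) := by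
  haveI : Nonempty (Fin M) := Fin.pos_iff_nonempty.mp hM
  rw [EuclideanSpace.volume_closedBall, Fintype.card_fin, ← ENNReal.ofReal_pow hρ,
    ← ENNReal.ofReal_mul (by positivity), mul_comm]
  congr 3
  · rw [← Real.rpow_natCast (√π) M, Real.sqrt_eq_rpow, ← Real.rpow_mul pi_pos.le]
    ring_nf
  · rw [add_comm]

lemma aux_integrable {c p : ℝ} (hc : 0 < c) (hp : 0 < p) :
    IntegrableOn (fun t : ℝ => Real.exp (-(c * t ^ p))) (Set.Ioi 0) := by
  have h1 : IntegrableOn (fun x : ℝ => x ^ (1 / p - 1) * Real.exp (-c * x)) (Set.Ioi 0) := by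
    have h0 : (0:ℝ) < 1 / p := by positivity
    have := integrableOn_rpow_mul_exp_neg_mul_rpow (p := 1) (s := 1 / p - 1) (b := c)
      (by linarith) one_pos hc
    simpa using this
  have := (integrableOn_Ioi_comp_rpow_iff' (fun x : ℝ => Real.exp (-(c * x ^ p)))
      (p := 1 / p) (one_div_ne_zero hp.ne')).mp ?_
  · exact this
  · apply h1.congr_fun ?_ measurableSet_Ioi
    intro x hx
    simp only [smul_eq_mul]
    rw [← Real.rpow_mul (le_of_lt hx), one_div_mul_cancel hp.ne', Real.rpow_one, neg_mul]

variable {M : ℕ}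

lemma aux_prob (R : Set (EuclideanSpace ℝ (Fin M))) (hRpos : volume R ≠ 0)
    (hRfin : volume R ≠ ⊤) :
    IsProbabilityMeasure ((volume R)⁻¹ • volume.restrict R) := by
  constructor
  rw [Measure.smul_apply, Measure.restrict_apply_univ, smul_eq_mul,
    ENNReal.inv_mul_cancel hRpos hRfin]

lemma aux_surv (hM : 0 < M) (R : Set (EuclideanSpace ℝ (Fin M))) (hRpos : volume R ≠ 0)
    (hRfin : volume R ≠ ⊤) {ρ : ℝ} (hρ : 0 ≤ ρ) (hsub : Metric.closedBall 0 ρ ⊆ R) :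
    ((volume R)⁻¹ • volume.restrict R) {x | ρ < ‖x‖} =
      ENNReal.ofReal (1 - (π ^ ((M : ℝ) / 2) / Real.Gamma (1 + M / 2)) /
        (volume R).toReal * ρ ^ M) := by
  haveI := aux_prob R hRpos hRfin
  have hL : 0 < (volume R).toReal := ENNReal.toReal_pos hRpos hRfin
  have hB : 0 < π ^ ((M : ℝ) / 2) / Real.Gamma (1 + M / 2) := by
    apply div_pos (Real.rpow_pos_of_pos pi_pos _)
    apply Real.Gamma_pos_of_pos; positivity
  have hset : {x : EuclideanSpace ℝ (Fin M) | ρ < ‖x‖} = (Metric.closedBall 0 ρ)ᶜ := by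
    ext x; simp [mem_closedBall_zero_iff, not_le]
  rw [hset, prob_compl_eq_one_sub measurableSet_closedBall, Measure.smul_apply,
    Measure.restrict_apply measurableSet_closedBall,
    Set.inter_eq_left.mpr hsub, aux_cb_volume M hM ρ hρ, smul_eq_mul]
  nth_rewrite 1 [← ENNReal.ofReal_toReal hRfin]
  rw [← ENNReal.ofReal_inv_of_pos hL, ← ENNReal.ofReal_mul (by positivity),
    ← ENNReal.ofReal_one, ← ENNReal.ofReal_sub _ (by positivity)]
  congr 1
  field_simp

lemma aux_prob_eq {M N : ℕ} (hM : 0 < M) (hN : 0 < N) (r : ℝ) (hr : 0 < r)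
    {Ω : Type*} [MeasurableSpace Ω] (P : Measure Ω) [IsProbabilityMeasure P]
    (μ : Measure (EuclideanSpace ℝ (Fin M)))
    (s : ℕ → Ω → EuclideanSpace ℝ (Fin M)) (hmeas : ∀ i, Measurable (s i))
    (hindep : iIndepFun s P)
    (hunif : ∀ i, Measure.map (s i) P = μ)
    {t : ℝ} (ht : 0 < t) :
    P {ω | t < (N : ℝ) ^ (r / (M : ℝ)) * ⨅ i : Fin N, ‖s i ω‖ ^ r} =
      μ {x | t ^ (1 / r) / (N : ℝ) ^ (1 / (M : ℝ)) < ‖x‖} ^ N := by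
  have hNpos : (0 : ℝ) < N := Nat.cast_pos.mpr hN
  have hc : (0 : ℝ) < (N : ℝ) ^ (r / (M : ℝ)) := rpow_pos_of_pos hNpos _
  set ρ : ℝ := t ^ (1 / r) / (N : ℝ) ^ (1 / (M : ℝ)) with hρdef
  have hρeq : ρ = (t / (N : ℝ) ^ (r / (M : ℝ))) ^ r⁻¹ := by
    rw [Real.div_rpow ht.le (rpow_pos_of_pos hNpos _).le, ← Real.rpow_mul hNpos.le,
      hρdef, one_div]
    congr 2
    field_simp
  have hA : MeasurableSet {x : EuclideanSpace ℝ (Fin M) | ρ < ‖x‖} :=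
    measurableSet_lt measurable_const measurable_norm
  have hev : {ω | t < (N : ℝ) ^ (r / (M : ℝ)) * ⨅ i : Fin N, ‖s i ω‖ ^ r} =
      ⋂ i ∈ Finset.range N, (s i) ⁻¹' {x | ρ < ‖x‖} := by
    ext ω
    simp only [Set.mem_setOf_eq, Set.mem_iInter, Set.mem_preimage, Finset.mem_range]
    rw [← div_lt_iff₀' hc, aux_inf_lt hN]
    constructor
    · intro h i hi
      have := h ⟨i, hi⟩
      rwa [hρeq, Real.rpow_inv_lt_iff_of_pos (by positivity) (norm_nonneg _) hr]
    · intro h i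
      rw [← Real.rpow_inv_lt_iff_of_pos (by positivity) (norm_nonneg _) hr, ← hρeq]
      exact h i i.2
  rw [hev, hindep.meas_biInter (fun i _ => ⟨_, hA, rfl⟩)]
  rw [Finset.prod_congr rfl (fun i _ => ?_), Finset.prod_const, Finset.card_range]
  rw [← Measure.map_apply (hmeas i) hA, hunif i]

set_option maxHeartbeats 1000000 in
/-- Asymptotics of the minimum `r`-th power norm of `N` i.i.d. uniform points on a
compact region `R ⊆ ℝ^M` containing a neighborhood of `0`:
`lim_N E[N^(r/M) min_i ‖sᵢ‖^r] = B_M^(-r/M) Γ(1+r/M) λ(R)^(r/M)`. -/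
theorem slm_asymptotics_uniform (M : ℕ) (hM : 0 < M) (r : ℝ) (hr : 0 < r)
    {Ω : Type*} [MeasurableSpace Ω] (P : Measure Ω) [IsProbabilityMeasure P]
    (R : Set (EuclideanSpace ℝ (Fin M))) (hRcomp : IsCompact R)
    (hR0 : 0 ∈ interior R) (hRpos : volume R ≠ 0)
    (s : ℕ → Ω → EuclideanSpace ℝ (Fin M))
    (hmeas : ∀ i, Measurable (s i))
    (hindep : iIndepFun s P)
    (hunif : ∀ i, Measure.map (s i) P = (volume R)⁻¹ • volume.restrict R) :
    Tendsto
      (fun N : ℕ => ∫ ω, (N : ℝ) ^ (r / M) * (⨅ i : Fin N, ‖s i ω‖ ^ r) ∂P)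
      atTop
      (nhds ((π ^ ((M : ℝ) / 2) / Real.Gamma (1 + M / 2)) ^ (-(r / M)) *
        Real.Gamma (1 + r / M) * (volume R).toReal ^ (r / M))) := by
  have hRfin : volume R ≠ ⊤ := hRcomp.measure_lt_top.ne
  have hMR : (0 : ℝ) < M := Nat.cast_pos.mpr hM
  set μ : Measure (EuclideanSpace ℝ (Fin M)) := (volume R)⁻¹ • volume.restrict R with hμdef
  haveI instμ : IsProbabilityMeasure μ := aux_prob R hRpos hRfin
  set B : ℝ := π ^ ((M : ℝ) / 2) / Real.Gamma (1 + M / 2) with hBdef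
  have hB : 0 < B := by
    apply div_pos (Real.rpow_pos_of_pos pi_pos _)
    apply Real.Gamma_pos_of_pos; positivity
  set L : ℝ := (volume R).toReal with hLdef
  have hL : 0 < L := ENNReal.toReal_pos hRpos hRfin
  set κ : ℝ := B / L with hκdef
  have hκ : 0 < κ := div_pos hB hL
  set p : ℝ := (M : ℝ) / r with hpdef
  have hp : 0 < p := div_pos hMR hr
  obtain ⟨ε, hε, hεR⟩ : ∃ ε > 0, Metric.closedBall (0 : EuclideanSpace ℝ (Fin M)) ε ⊆ R := by
    obtain ⟨ε, hε, h⟩ := Metric.isOpen_iff.mp isOpen_interior 0 hR0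
    exact ⟨ε / 2, by positivity,
      (Metric.closedBall_subset_ball (by linarith)).trans (h.trans interior_subset)⟩
  obtain ⟨D0, hD0⟩ := hRcomp.isBounded.subset_closedBall 0
  set D : ℝ := max D0 ε with hDdef
  have hεD : ε ≤ D := le_max_right _ _
  have hD : 0 < D := lt_of_lt_of_le hε hεD
  have hRD : R ⊆ Metric.closedBall 0 D :=
    hD0.trans (Metric.closedBall_subset_closedBall (le_max_left _ _))
  set S : ℝ → ℝ≥0∞ := fun ρ => μ {x | ρ < ‖x‖} with hSdef
  have hSanti : Antitone S := by
    intro a b hab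
    exact measure_mono (fun x hx => lt_of_le_of_lt hab hx)
  have hSsmall : ∀ ρ : ℝ, 0 ≤ ρ → ρ ≤ ε → S ρ = ENNReal.ofReal (1 - κ * ρ ^ M) := by
    intro ρ h0 hρε
    show μ {x | ρ < ‖x‖} = ENNReal.ofReal (1 - κ * ρ ^ M)
    rw [hμdef]
    rw [aux_surv hM R hRpos hRfin h0
      ((Metric.closedBall_subset_closedBall hρε).trans hεR), ← hBdef, ← hLdef, ← hκdef]
  have hSzero : ∀ ρ : ℝ, D ≤ ρ → S ρ = 0 := by
    intro ρ hρ
    show μ {x | ρ < ‖x‖} = 0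
    rw [hμdef, Measure.smul_apply, Measure.restrict_apply (measurableSet_lt measurable_const measurable_norm)]
    have : {x : EuclideanSpace ℝ (Fin M) | ρ < ‖x‖} ∩ R = ∅ := by
      ext x
      simp only [Set.mem_inter_iff, Set.mem_setOf_eq, Set.mem_empty_iff_false, iff_false]
      rintro ⟨h1, h2⟩
      have := Metric.mem_closedBall.mp (hRD h2)
      rw [dist_zero_right] at this
      linarith
    rw [this, measure_empty, smul_eq_mul, mul_zero]
  have hSexp : ∀ ρ : ℝ, 0 ≤ ρ → ρ ≤ ε → S ρ ≤ ENNReal.ofReal (Real.exp (-(κ * ρ ^ M))) := by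
    intro ρ h0 hρε
    rw [hSsmall ρ h0 hρε]
    apply ENNReal.ofReal_le_ofReal
    have := Real.add_one_le_exp (-(κ * ρ ^ M))
    linarith
  set m : ℝ := κ * ε ^ M with hmdef
  have hm : 0 < m := by positivity
  set c : ℝ := min κ (m / D ^ M) with hcdef
  have hc : 0 < c := lt_min hκ (by positivity)
  have hcκ : c ≤ κ := min_le_left _ _
  have hcD : c ≤ m / D ^ M := min_le_right _ _
  set H : ℕ → ℝ → ℝ≥0∞ :=
    fun N t => S ((max t 0) ^ (1 / r) / (N : ℝ) ^ (1 / (M : ℝ))) ^ N with hHdef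
  set I : ℕ → ℝ≥0∞ := fun N => ∫⁻ t in Ioi (0 : ℝ), H N t with hIdef
  -- ρ-power computation
  have hρpow : ∀ (N : ℕ) (t : ℝ), 0 < N → 0 < t →
      (t ^ (1 / r) / (N : ℝ) ^ (1 / (M : ℝ))) ^ M = t ^ p / N := by
    intro N t hN ht
    have hNpos : (0 : ℝ) < N := Nat.cast_pos.mpr hN
    rw [← Real.rpow_natCast (t ^ (1 / r) / (N : ℝ) ^ (1 / (M : ℝ))) M,
      Real.div_rpow (by positivity) (by positivity), ← Real.rpow_mul ht.le,
      ← Real.rpow_mul hNpos.le, one_div_mul_cancel hMR.ne', Real.rpow_one,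
      hpdef]
    congr 2
    field_simp
  -- Step 1: representation
  have hrep : ∀ N : ℕ, 0 < N →
      (∫ ω, (N : ℝ) ^ (r / (M : ℝ)) * (⨅ i : Fin N, ‖s i ω‖ ^ r) ∂P) = (I N).toReal := by
    intro N hN
    haveI : Nonempty (Fin N) := Fin.pos_iff_nonempty.mp hN
    have hXnn : ∀ ω, 0 ≤ (N : ℝ) ^ (r / (M : ℝ)) * ⨅ i : Fin N, ‖s i ω‖ ^ r := by
      intro ω
      apply mul_nonneg (Real.rpow_nonneg (Nat.cast_nonneg N) _)
      apply Real.iInf_nonneg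
      intro i
      exact Real.rpow_nonneg (norm_nonneg _) _
    have hXmeas : Measurable fun ω => (N : ℝ) ^ (r / (M : ℝ)) * ⨅ i : Fin N, ‖s i ω‖ ^ r :=
      measurable_const.mul (Measurable.iInf fun i =>
        (Real.continuous_rpow_const hr.le).measurable.comp ((hmeas i).norm))
    rw [integral_eq_lintegral_of_nonneg_ae (ae_of_all _ hXnn) hXmeas.aestronglyMeasurable,
      lintegral_eq_lintegral_meas_lt P (ae_of_all _ hXnn) hXmeas.aemeasurable]
    congr 1
    apply lintegral_congr_ae
    filter_upwards [ae_restrict_mem measurableSet_Ioi] with t ht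
    rw [aux_prob_eq hM hN r hr P μ s hmeas hindep hunif ht]
    show _ = S ((t ⊔ 0) ^ (1 / r) / (N : ℝ) ^ (1 / (M : ℝ))) ^ N
    rw [max_eq_left (le_of_lt ht)]
  -- Step 4: measurability
  have hHmeas : ∀ N : ℕ, Measurable (H N) := by
    intro N
    rcases Nat.eq_zero_or_pos N with h0 | hN
    · subst h0
      simp only [hHdef, pow_zero]
      exact measurable_const
    · have hNpos : (0 : ℝ) < N := Nat.cast_pos.mpr hN
      have : Antitone (H N) := by
        intro a b hab
        simp only [hHdef]
        apply pow_le_pow_left' (hSanti ?_)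
        apply div_le_div_of_nonneg_right ?_ (Real.rpow_pos_of_pos hNpos _).le
        exact Real.rpow_le_rpow (le_max_right a 0) (max_le_max hab le_rfl) (by positivity)
      exact this.measurable
  -- Step 3: bound
  have hbound : ∀ n : ℕ, ∀ t : ℝ, t ∈ Ioi (0:ℝ) →
      H (n + 1) t ≤ ENNReal.ofReal (Real.exp (-(c * t ^ p))) := by
    intro n t ht
    have ht' : (0 : ℝ) < t := ht
    have hN : 0 < n + 1 := Nat.succ_pos n
    have hNpos : (0 : ℝ) < ((n + 1 : ℕ) : ℝ) := Nat.cast_pos.mpr hN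
    show S ((t ⊔ 0) ^ (1 / r) / ((n + 1 : ℕ) : ℝ) ^ (1 / (M : ℝ))) ^ (n + 1) ≤ _
    rw [max_eq_left ht'.le]
    set ρ : ℝ := t ^ (1 / r) / ((n + 1 : ℕ) : ℝ) ^ (1 / (M : ℝ)) with hρdef
    have hρ0 : 0 < ρ := div_pos (Real.rpow_pos_of_pos ht' _) (Real.rpow_pos_of_pos hNpos _)
    have hρM : ρ ^ M = t ^ p / ((n + 1 : ℕ) : ℝ) := hρpow (n + 1) t hN ht'
    have htp0 : 0 < t ^ p := Real.rpow_pos_of_pos ht' p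
    have hDM : (0 : ℝ) < D ^ M := by positivity
    rcases le_or_gt ρ ε with hcase | hcase
    · calc S ρ ^ (n + 1) ≤ ENNReal.ofReal (Real.exp (-(κ * ρ ^ M))) ^ (n + 1) :=
            pow_le_pow_left' (hSexp ρ hρ0.le hcase) _
        _ = ENNReal.ofReal (Real.exp (-(κ * ρ ^ M)) ^ (n + 1)) :=
            (ENNReal.ofReal_pow (Real.exp_pos _).le _).symm
        _ ≤ ENNReal.ofReal (Real.exp (-(c * t ^ p))) := by
            apply ENNReal.ofReal_le_ofReal
            rw [← Real.exp_nat_mul]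
            apply Real.exp_le_exp.mpr
            rw [hρM]
            have heq : ((n + 1 : ℕ) : ℝ) * -(κ * (t ^ p / ((n + 1 : ℕ) : ℝ))) = -(κ * t ^ p) := by
              field_simp
            rw [heq]
            nlinarith [htp0.le, hcκ]
    · rcases le_or_gt ρ D with hcase2 | hcase2
      · have hSρ : S ρ ≤ ENNReal.ofReal (Real.exp (-m)) := by
          refine (hSanti hcase.le).trans ?_
          rw [hmdef]
          exact hSexp ε hε.le le_rfl
        have htpD : t ^ p ≤ ((n + 1 : ℕ) : ℝ) * D ^ M := by
          have h1 : ρ ^ M ≤ D ^ M := pow_le_pow_left₀ hρ0.le hcase2 M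
          rw [hρM, div_le_iff₀ hNpos] at h1
          linarith [h1]
        calc S ρ ^ (n + 1) ≤ ENNReal.ofReal (Real.exp (-m)) ^ (n + 1) :=
              pow_le_pow_left' hSρ _
          _ = ENNReal.ofReal (Real.exp (-m) ^ (n + 1)) :=
              (ENNReal.ofReal_pow (Real.exp_pos _).le _).symm
          _ ≤ ENNReal.ofReal (Real.exp (-(c * t ^ p))) := by
              apply ENNReal.ofReal_le_ofReal
              rw [← Real.exp_nat_mul]
              apply Real.exp_le_exp.mpr
              have h2 : c * t ^ p ≤ (m / D ^ M) * t ^ p :=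
                mul_le_mul_of_nonneg_right hcD htp0.le
              have h3 : (m / D ^ M) * t ^ p ≤ (m / D ^ M) * (((n + 1 : ℕ) : ℝ) * D ^ M) :=
                mul_le_mul_of_nonneg_left htpD (by positivity)
              have h4 : (m / D ^ M) * (((n + 1 : ℕ) : ℝ) * D ^ M) = ((n + 1 : ℕ) : ℝ) * m := by
                field_simp
              nlinarith [h2, h3, h4]
      · rw [hSzero ρ hcase2.le, zero_pow (Nat.succ_ne_zero n)]
        exact zero_le
  -- Step 2: pointwise limit
  have hlim : ∀ t : ℝ, t ∈ Ioi (0:ℝ) →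
      Tendsto (fun n : ℕ => H (n + 1) t) atTop
        (𝓝 (ENNReal.ofReal (Real.exp (-(κ * t ^ p))))) := by
    intro t ht
    have ht' : (0 : ℝ) < t := ht
    set a : ℝ := κ * t ^ p with hadef
    have ha : 0 < a := mul_pos hκ (Real.rpow_pos_of_pos ht' p)
    have key : Tendsto (fun n : ℕ => (1 + -a / ((n + 1 : ℕ) : ℝ)) ^ (n + 1)) atTop
        (𝓝 (Real.exp (-a))) :=
      (Real.tendsto_one_add_div_pow_exp (-a)).comp (tendsto_add_atTop_nat 1)
    have key2 : Tendsto (fun n : ℕ => ENNReal.ofReal ((1 + -a / ((n + 1 : ℕ) : ℝ)) ^ (n + 1)))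
        atTop (𝓝 (ENNReal.ofReal (Real.exp (-a)))) := ENNReal.tendsto_ofReal key
    apply Tendsto.congr' ?_ key2
    have hNtop : Tendsto (fun n : ℕ => ((n + 1 : ℕ) : ℝ) ^ (1 / (M : ℝ))) atTop atTop :=
      (tendsto_rpow_atTop (by positivity)).comp
        (tendsto_natCast_atTop_atTop.comp (tendsto_add_atTop_nat 1))
    have h1 : ∀ᶠ n : ℕ in atTop, t ^ (1 / r) / ((n + 1 : ℕ) : ℝ) ^ (1 / (M : ℝ)) ≤ ε := by
      filter_upwards [hNtop.eventually_ge_atTop (t ^ (1 / r) / ε)] with n hn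
      have hX : (0 : ℝ) < ((n + 1 : ℕ) : ℝ) ^ (1 / (M : ℝ)) :=
        lt_of_lt_of_le (by positivity) hn
      rw [div_le_iff₀ hX]
      have := (div_le_iff₀ hε).mp hn
      linarith [this]
    have h2 : ∀ᶠ n : ℕ in atTop, a / ((n + 1 : ℕ) : ℝ) ≤ 1 := by
      filter_upwards [eventually_ge_atTop ⌈a⌉₊] with n hn
      rw [div_le_one (by positivity)]
      calc a ≤ (⌈a⌉₊ : ℝ) := Nat.le_ceil a
        _ ≤ ((n : ℕ) : ℝ) := Nat.cast_le.mpr hn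
        _ ≤ ((n + 1 : ℕ) : ℝ) := by push_cast; linarith
    filter_upwards [h1, h2] with n hn1 hn2
    have hNpos : (0 : ℝ) < ((n + 1 : ℕ) : ℝ) := Nat.cast_pos.mpr (Nat.succ_pos n)
    have hρ0 : (0 : ℝ) ≤ t ^ (1 / r) / ((n + 1 : ℕ) : ℝ) ^ (1 / (M : ℝ)) := by positivity
    have hρM := hρpow (n + 1) t (Nat.succ_pos n) ht'
    show ENNReal.ofReal ((1 + -a / ((n + 1 : ℕ) : ℝ)) ^ (n + 1)) =
      S ((t ⊔ 0) ^ (1 / r) / ((n + 1 : ℕ) : ℝ) ^ (1 / (M : ℝ))) ^ (n + 1)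
    rw [max_eq_left ht'.le, hSsmall _ hρ0 hn1, hρM, ← ENNReal.ofReal_pow ?nn]
    case nn =>
      have : κ * (t ^ p / ((n + 1 : ℕ) : ℝ)) = a / ((n + 1 : ℕ) : ℝ) := by
        rw [hadef]; ring
      rw [this]
      linarith [hn2]
    congr 2
    rw [hadef]
    ring
  set ℓ : ℝ≥0∞ := ∫⁻ t in Ioi (0 : ℝ), ENNReal.ofReal (Real.exp (-(κ * t ^ p))) with hℓdef
  have hℓfin : ℓ ≠ ⊤ := (aux_integrable hκ hp).lintegral_lt_top.ne
  -- Step 6: dominated convergence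
  have hI1 : Tendsto (fun n : ℕ => I (n + 1)) atTop (𝓝 ℓ) := by
    apply tendsto_lintegral_of_dominated_convergence
      (fun t => ENNReal.ofReal (Real.exp (-(c * t ^ p))))
      (fun n => hHmeas (n + 1))
      (fun n => (ae_restrict_mem measurableSet_Ioi).mono (hbound n))
      ((aux_integrable hc hp).lintegral_lt_top.ne)
      ((ae_restrict_mem measurableSet_Ioi).mono hlim)
  have hItend : Tendsto I atTop (𝓝 ℓ) := (tendsto_add_atTop_iff_nat 1).mp hI1
  -- Step 8: value of the limit
  have hℓval : ℓ.toReal = B ^ (-(r / (M : ℝ))) * Real.Gamma (1 + r / M) * L ^ (r / (M : ℝ)) := by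
    have hnn : ∀ t : ℝ, 0 ≤ Real.exp (-(κ * t ^ p)) := fun t => (Real.exp_pos _).le
    have hmble : AEStronglyMeasurable (fun t : ℝ => Real.exp (-(κ * t ^ p)))
        (volume.restrict (Ioi 0)) := by
      apply Measurable.aestronglyMeasurable
      exact (Real.continuous_exp.comp
        ((continuous_const.mul (Real.continuous_rpow_const hp.le)).neg)).measurable
    have hint := integral_eq_lintegral_of_nonneg_ae (μ := volume.restrict (Ioi (0:ℝ)))
      (ae_of_all _ hnn) hmble
    have hval : ∫ t in Ioi (0 : ℝ), Real.exp (-(κ * t ^ p)) =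
        κ ^ (-1 / p) * Real.Gamma (1 / p + 1) := by
      rw [← integral_exp_neg_mul_rpow hp hκ]
      apply setIntegral_congr_fun measurableSet_Ioi
      intro x _
      simp [neg_mul]
    rw [hℓdef, ← hint, hval]
    have h1p : 1 / p = r / (M : ℝ) := by
      rw [hpdef, one_div_div]
    rw [neg_div, h1p, add_comm (r / (M : ℝ)) 1, hκdef, Real.div_rpow hB.le hL.le,
      Real.rpow_neg hL.le]
    field_simp
  have final : Tendsto (fun N => (I N).toReal) atTop
      (𝓝 (B ^ (-(r / (M : ℝ))) * Real.Gamma (1 + r / M) * L ^ (r / (M : ℝ)))) := by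
    rw [← hℓval]
    exact (ENNReal.tendsto_toReal hℓfin).comp hItend
  refine Tendsto.congr' ?_ final
  filter_upwards [eventually_ge_atTop 1] with N hN
  exact (hrep N hN).symm
end

section
/- For i.i.d. points s₁,...,s_N uniform over a compact set R ⊂ R^M containing a neighborhood of 0, the random variable N^(2/M) min_i ‖sᵢ‖² converges in distribution to a Weibull-type law with P(limit > t) = exp(−B_M t^(M/2)/λ(R)). -/
open MeasureTheory ProbabilityTheory Filter Real Metric

/-- Distributional limit: for i.i.d. uniform points on a compact `R ∋ 0`,
`P(N^(2/M) min_i ‖sᵢ‖² > t) → exp(−B_M t^(M/2)/λ(R))` for every `t > 0`,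
i.e. the rescaled minimum energy has a Weibull-type limit law. -/
theorem slm_weibull_limit (M : ℕ) (hM : 0 < M)
    {Ω : Type*} [MeasurableSpace Ω] (P : Measure Ω) [IsProbabilityMeasure P]
    (R : Set (EuclideanSpace ℝ (Fin M))) (hRcomp : IsCompact R)
    (hR0 : 0 ∈ interior R) (hRpos : volume R ≠ 0)
    (s : ℕ → Ω → EuclideanSpace ℝ (Fin M))
    (hmeas : ∀ i, Measurable (s i))
    (hindep : iIndepFun s P)
    (hunif : ∀ i, Measure.map (s i) P = (volume R)⁻¹ • volume.restrict R) :
    ∀ t : ℝ, 0 < t →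
      Tendsto
        (fun N : ℕ =>
          (P {ω | t < (N : ℝ) ^ ((2 : ℝ) / M) * (⨅ i : Fin N, ‖s i ω‖ ^ 2)}).toReal)
        atTop
        (nhds (Real.exp (-(π ^ ((M : ℝ) / 2) / Real.Gamma (1 + M / 2)) *
          t ^ ((M : ℝ) / 2) / (volume R).toReal))) := by
  intro t ht
  haveI : Nonempty (Fin M) := Fin.pos_iff_nonempty.mp hM
  have hMR : (0 : ℝ) < M := Nat.cast_pos.mpr hM
  have hΓ : 0 < Real.Gamma (1 + (M : ℝ) / 2) :=
    Real.Gamma_pos_of_pos (by positivity)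
  set A : ℝ := π ^ ((M : ℝ) / 2) / Real.Gamma (1 + (M : ℝ) / 2) with hA
  have hvol_lt : volume R < ⊤ := hRcomp.measure_lt_top
  set v : ℝ := (volume R).toReal with hv
  have hv0 : 0 < v := ENNReal.toReal_pos hRpos hvol_lt.ne
  set c : ℝ := A * t ^ ((M : ℝ) / 2) / v with hc
  have hgoal : (-(π ^ ((M : ℝ) / 2) / Real.Gamma (1 + (M : ℝ) / 2)) *
      t ^ ((M : ℝ) / 2) / v) = -c := by
    rw [hc, hA]; ring
  rw [hgoal]
  have hlim := Real.tendsto_one_add_div_pow_exp (-c)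
  refine Tendsto.congr' ?_ hlim
  -- choose ε with closedBall 0 ε ⊆ R
  obtain ⟨ε, hε, hball⟩ :=
    Metric.mem_nhds_iff.mp (mem_interior_iff_mem_nhds.mp hR0)
  -- r N := √(t / N^(2/M)) → 0
  have htend : Tendsto (fun N : ℕ => Real.sqrt (t / (N : ℝ) ^ ((2 : ℝ) / M)))
      atTop (nhds 0) := by
    have h1 : Tendsto (fun N : ℕ => (N : ℝ) ^ ((2 : ℝ) / M)) atTop atTop :=
      (tendsto_rpow_atTop (by positivity)).comp tendsto_natCast_atTop_atTop
    have h2 : Tendsto (fun N : ℕ => t / (N : ℝ) ^ ((2 : ℝ) / M)) atTop (nhds 0) :=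
      Tendsto.div_atTop tendsto_const_nhds h1
    have := (Real.continuous_sqrt.tendsto 0).comp h2
    simpa [Function.comp_def] using this
  have hev : ∀ᶠ N : ℕ in atTop,
      Real.sqrt (t / (N : ℝ) ^ ((2 : ℝ) / M)) < ε / 2 :=
    htend.eventually_lt_const (by positivity)
  filter_upwards [hev, eventually_ge_atTop 1] with N hrN hN1
  -- fixed N computations
  have hN0 : (0 : ℝ) < N := by exact_mod_cast hN1
  have hNpow : (0 : ℝ) < (N : ℝ) ^ ((2 : ℝ) / M) := Real.rpow_pos_of_pos hN0 _
  set u : ℝ := t / (N : ℝ) ^ ((2 : ℝ) / M) with hudef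
  have hu0 : 0 < u := div_pos ht hNpow
  set r : ℝ := Real.sqrt u with hrdef
  have hr0 : 0 < r := Real.sqrt_pos.mpr hu0
  have hsub : Metric.closedBall (0 : EuclideanSpace ℝ (Fin M)) r ⊆ R :=
    (Metric.closedBall_subset_ball (by simpa using (lt_of_lt_of_le hrN (by linarith)))).trans hball
  have hB : MeasurableSet {x : EuclideanSpace ℝ (Fin M) | u < ‖x‖ ^ 2} :=
    measurableSet_lt measurable_const ((measurable_norm).pow_const 2)
  haveI : Nonempty (Fin N) := Fin.pos_iff_nonempty.mp hN1
  -- event equality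
  have hset : {ω | t < (N : ℝ) ^ ((2 : ℝ) / M) * (⨅ i : Fin N, ‖s i ω‖ ^ 2)} =
      ⋂ i ∈ Finset.range N, (s i) ⁻¹' {x | u < ‖x‖ ^ 2} := by
    ext ω
    simp only [Set.mem_setOf_eq, Set.mem_iInter, Set.mem_preimage, Finset.mem_range]
    rw [mul_comm, ← div_lt_iff₀ hNpow]
    constructor
    · intro h i hi
      calc u < ⨅ j : Fin N, ‖s j ω‖ ^ 2 := h
        _ ≤ ‖s (⟨i, hi⟩ : Fin N) ω‖ ^ 2 :=
          ciInf_le (Set.Finite.bddBelow (Set.finite_range _)) _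
    · intro h
      obtain ⟨i, hi⟩ := exists_eq_ciInf_of_finite (f := fun j : Fin N => ‖s j ω‖ ^ 2)
      rw [← hi]
      exact h i i.isLt
  -- measure of each factor
  set q : ENNReal := (volume R)⁻¹ *
    (volume R - volume (Metric.closedBall (0 : EuclideanSpace ℝ (Fin M)) r)) with hq
  have hmap : ∀ i : ℕ, P ((s i) ⁻¹' {x | u < ‖x‖ ^ 2}) = q := by
    intro i
    rw [← Measure.map_apply (hmeas i) hB, hunif i, Measure.smul_apply, smul_eq_mul,
      Measure.restrict_apply hB]
    congr 1
    have hseteq : {x : EuclideanSpace ℝ (Fin M) | u < ‖x‖ ^ 2} ∩ R =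
        R \ Metric.closedBall 0 r := by
      ext x
      simp only [Set.mem_inter_iff, Set.mem_setOf_eq, Set.mem_diff, Metric.mem_closedBall,
        dist_zero_right, not_le]
      have hiff : u < ‖x‖ ^ 2 ↔ r < ‖x‖ := by
        rw [hrdef]
        constructor
        · intro h
          have h' := Real.sqrt_lt_sqrt hu0.le h
          rwa [Real.sqrt_sq (norm_nonneg x)] at h'
        · intro h
          have h2 := Real.sq_sqrt hu0.le
          nlinarith [Real.sqrt_nonneg u]
      tauto
    rw [hseteq, measure_diff hsub measurableSet_closedBall.nullMeasurableSet
      measure_closedBall_lt_top.ne]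
  -- put it together
  rw [hset, hindep.meas_biInter (fun i _ => ⟨_, hB, rfl⟩)]
  have hprod : ∏ i ∈ Finset.range N, P ((s i) ⁻¹' {x | u < ‖x‖ ^ 2}) = q ^ N := by
    rw [Finset.prod_congr rfl (fun i _ => hmap i), Finset.prod_const, Finset.card_range]
  rw [hprod, ENNReal.toReal_pow]
  -- compute q.toReal
  have hmono : volume (Metric.closedBall (0 : EuclideanSpace ℝ (Fin M)) r) ≤ volume R :=
    measure_mono hsub
  have hballvol : (volume (Metric.closedBall (0 : EuclideanSpace ℝ (Fin M)) r)).toReal =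
      A * t ^ ((M : ℝ) / 2) / N := by
    rw [EuclideanSpace.volume_closedBall]
    simp only [Fintype.card_fin]
    rw [ENNReal.toReal_mul, ← ENNReal.ofReal_pow hr0.le, ENNReal.toReal_ofReal (by positivity),
      ENNReal.toReal_ofReal (by positivity)]
    have h1 : r ^ M = u ^ ((M : ℝ) / 2) := by
      rw [hrdef, Real.sqrt_eq_rpow, ← Real.rpow_natCast (u ^ ((1:ℝ)/2)) M,
        ← Real.rpow_mul hu0.le]
      congr 1
      ring
    have h2 : Real.sqrt π ^ M = π ^ ((M : ℝ) / 2) := by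
      rw [Real.sqrt_eq_rpow, ← Real.rpow_natCast (π ^ ((1:ℝ)/2)) M,
        ← Real.rpow_mul Real.pi_pos.le]
      congr 1
      ring
    have h3 : u ^ ((M : ℝ) / 2) = t ^ ((M : ℝ) / 2) / N := by
      rw [hudef, Real.div_rpow ht.le hNpow.le, ← Real.rpow_mul hN0.le,
        show (2 : ℝ) / M * ((M : ℝ) / 2) = 1 by field_simp, Real.rpow_one]
    have h4 : ((M : ℝ) / 2 + 1) = (1 + (M : ℝ) / 2) := by ring
    rw [h1, h2, h3, h4, hA]
    field_simp
  have hqtoReal : q.toReal = 1 + -c / N := by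
    rw [hq, ENNReal.toReal_mul, ENNReal.toReal_inv, ENNReal.toReal_sub_of_le hmono hvol_lt.ne,
      hballvol, ← hv, hc]
    field_simp
    ring
  rw [hqtoReal]
end

section
/- Let R_sphere = B_M(0, ρ) and R_oval be the ellipsoid {x : xᵀQx ≤ ρ'²} of the same volume, where Q has eigenvalues λ₁,...,λ_M with (det Q)^(1/M) = g. Then the ratio of the average value of xᵀQx under the uniform distribution on R_sphere to that on R_oval equals the channel gain G_H = (Σλᵢ/M)/(Πλᵢ)^(1/M). -/
open Matrix MeasureTheory Finset

namespace SphereOvalAux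

variable {M : ℕ}

/-- The Euclidean ball of radius `r` as a subset of `Fin M → ℝ`. -/
def S (M : ℕ) (r : ℝ) : Set (Fin M → ℝ) := {x | ∑ i, x i ^ 2 ≤ r ^ 2}

lemma continuous_sumsq : Continuous (fun x : Fin M → ℝ => ∑ i, x i ^ 2) := by
  continuity

lemma measurableSet_S (r : ℝ) : MeasurableSet (S M r) :=
  measurableSet_le continuous_sumsq.measurable measurable_const

lemma isCompact_S (r : ℝ) : IsCompact (S M r) := by
  have hclosed : IsClosed (S M r) :=
    isClosed_le continuous_sumsq continuous_const
  have hsub : S M r ⊆ Metric.closedBall 0 |r| := by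
    intro x hx
    simp only [Metric.mem_closedBall, dist_zero_right]
    rw [pi_norm_le_iff_of_nonneg (abs_nonneg r)]
    intro i
    have h1 : x i ^ 2 ≤ r ^ 2 := le_trans
      (Finset.single_le_sum (f := fun j => x j ^ 2) (fun j _ => sq_nonneg _) (mem_univ i)) hx
    have h2 := Real.sqrt_le_sqrt h1
    rwa [Real.sqrt_sq_eq_abs, Real.sqrt_sq_eq_abs] at h2
  exact (isCompact_closedBall 0 |r|).of_isClosed_subset hclosed hsub

lemma integrableOn_S (r : ℝ) {f : (Fin M → ℝ) → ℝ} (hf : Continuous f) :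
    IntegrableOn f (S M r) :=
  hf.continuousOn.integrableOn_compact (isCompact_S r)

/-- Change of variables by an invertible matrix, full-space integrals. -/
lemma integral_comp_mulVec (A : Matrix (Fin M) (Fin M) ℝ) (hA : A.det ≠ 0)
    (f : (Fin M → ℝ) → ℝ) (hf : Measurable f) :
    ∫ x, f (A *ᵥ x) = |A.det|⁻¹ * ∫ y, f y := by
  have hdet : LinearMap.det (Matrix.toLin' A) ≠ 0 := by
    rwa [LinearMap.det_toLin']
  have hmap : volume.map (Matrix.toLin' A)
      = ENNReal.ofReal |(LinearMap.det (Matrix.toLin' A))⁻¹| • volume :=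
    Measure.map_linearMap_addHaar_eq_smul_addHaar volume hdet
  have hmeas : AEMeasurable (Matrix.toLin' A) (volume : Measure (Fin M → ℝ)) :=
    (LinearMap.continuous_of_finiteDimensional (Matrix.toLin' A)).measurable.aemeasurable
  calc ∫ x, f (A *ᵥ x) = ∫ x, f (Matrix.toLin' A x) := by
        simp only [Matrix.toLin'_apply]
    _ = ∫ y, f y ∂(volume.map (Matrix.toLin' A)) :=
        (integral_map hmeas hf.aestronglyMeasurable).symm
    _ = |A.det|⁻¹ * ∫ y, f y := by
        rw [hmap, integral_smul_measure, ENNReal.toReal_ofReal (abs_nonneg _),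
          LinearMap.det_toLin', abs_inv, smul_eq_mul]

/-- Change of variables by an invertible matrix, volumes. -/
lemma volume_preimage_mulVec (A : Matrix (Fin M) (Fin M) ℝ) (hA : A.det ≠ 0)
    (s : Set (Fin M → ℝ)) :
    volume ((fun x => A *ᵥ x) ⁻¹' s) = ENNReal.ofReal |A.det|⁻¹ * volume s := by
  have hdet : LinearMap.det (Matrix.toLin' A) ≠ 0 := by
    rwa [LinearMap.det_toLin']
  have h := Measure.addHaar_preimage_linearMap (volume : Measure (Fin M → ℝ)) hdet s
  have hset : (fun x => A *ᵥ x) ⁻¹' s = (Matrix.toLin' A) ⁻¹' s := by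
    ext x; simp [Matrix.toLin'_apply]
  rw [hset, h, LinearMap.det_toLin', abs_inv]

/-- Change of variables by an invertible matrix, set integrals. -/
lemma setIntegral_comp_mulVec (A : Matrix (Fin M) (Fin M) ℝ) (hA : A.det ≠ 0)
    (s : Set (Fin M → ℝ)) (hs : MeasurableSet s)
    (f : (Fin M → ℝ) → ℝ) (hf : Measurable f) :
    ∫ x in (fun x => A *ᵥ x) ⁻¹' s, f (A *ᵥ x) = |A.det|⁻¹ * ∫ y in s, f y := by
  have hcont : Continuous (fun x : Fin M → ℝ => A *ᵥ x) := by
    have := (LinearMap.continuous_of_finiteDimensional (Matrix.toLin' A))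
    exact this
  have hpre : MeasurableSet ((fun x => A *ᵥ x) ⁻¹' s) := hs.preimage hcont.measurable
  rw [← integral_indicator hs, ← integral_comp_mulVec A hA _ (hf.indicator hs),
    ← integral_indicator hpre]
  refine integral_congr_ae (Filter.EventuallyEq.of_eq (funext fun x => ?_))
  by_cases h : A *ᵥ x ∈ s <;> simp [Set.indicator_apply, h]

end SphereOvalAux

open SphereOvalAux

set_option maxHeartbeats 1000000

/-- The ratio of the average energy `xᵀQx` over a sphere to that over the
equal-volume ellipsoid `{x : xᵀQx ≤ ρ'²}` equals the channel gain
`G_H = (Σλᵢ/M)/(Πλᵢ)^(1/M)`. -/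
theorem sphere_vs_oval_gain (M : ℕ) (hM : 0 < M)
    (U : Matrix (Fin M) (Fin M) ℝ) (lam : Fin M → ℝ)
    (hlam : ∀ i, 0 < lam i) (hU : U * Uᵀ = 1)
    (Q : Matrix (Fin M) (Fin M) ℝ) (hQ : Q = U * Matrix.diagonal lam * Uᵀ)
    (ρ ρ' : ℝ) (hρ : 0 < ρ) (hρ' : 0 < ρ')
    (hvol : volume {x : Fin M → ℝ | ∑ i, x i ^ 2 ≤ ρ ^ 2}
      = volume {x : Fin M → ℝ | x ⬝ᵥ (Q *ᵥ x) ≤ ρ' ^ 2}) :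
    (((volume {x : Fin M → ℝ | ∑ i, x i ^ 2 ≤ ρ ^ 2}).toReal)⁻¹ *
        (∫ x in {x : Fin M → ℝ | ∑ i, x i ^ 2 ≤ ρ ^ 2}, x ⬝ᵥ (Q *ᵥ x))) /
      (((volume {x : Fin M → ℝ | x ⬝ᵥ (Q *ᵥ x) ≤ ρ' ^ 2}).toReal)⁻¹ *
        (∫ x in {x : Fin M → ℝ | x ⬝ᵥ (Q *ᵥ x) ≤ ρ' ^ 2}, x ⬝ᵥ (Q *ᵥ x)))
      = ((∑ i, lam i) / M) / ((∏ i, lam i) ^ ((1 : ℝ) / M)) := by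
  -- Basic determinant facts about U
  have hdetU2 : U.det * Uᵀ.det = 1 := by
    rw [← Matrix.det_mul, hU, Matrix.det_one]
  have hdetUt : Uᵀ.det = U.det := Matrix.det_transpose U
  have habsdetU : |U.det| = 1 := by
    have h : U.det * U.det = 1 := by rwa [hdetUt] at hdetU2
    nlinarith [abs_nonneg U.det, abs_mul_abs_self U.det]
  have hdetUt_ne : Uᵀ.det ≠ 0 := by
    intro h; rw [h, mul_zero] at hdetU2; exact one_ne_zero hdetU2.symm
  have habsdetUt : |Uᵀ.det| = 1 := by rw [hdetUt]; exact habsdetU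
  -- pointwise identities
  have hpt : ∀ x : Fin M → ℝ, x ⬝ᵥ (Q *ᵥ x) = ∑ i, lam i * (Uᵀ *ᵥ x) i ^ 2 := by
    intro x
    rw [hQ, ← Matrix.mulVec_mulVec, ← Matrix.mulVec_mulVec,
      Matrix.dotProduct_mulVec, ← Matrix.mulVec_transpose]
    simp only [dotProduct, Matrix.mulVec_diagonal]
    exact Finset.sum_congr rfl (fun i _ => by ring)
  have hnorm : ∀ x : Fin M → ℝ, ∑ i, (Uᵀ *ᵥ x) i ^ 2 = ∑ i, x i ^ 2 := by
    intro x
    have h1 : ∑ i, (Uᵀ *ᵥ x) i ^ 2 = (Uᵀ *ᵥ x) ⬝ᵥ (Uᵀ *ᵥ x) := by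
      simp [dotProduct, sq]
    have h2 : ∑ i, x i ^ 2 = x ⬝ᵥ x := by simp [dotProduct, sq]
    rw [h1, h2, Matrix.dotProduct_mulVec, ← Matrix.mulVec_transpose,
      Matrix.transpose_transpose, Matrix.mulVec_mulVec, hU, Matrix.one_mulVec]
  -- notation
  set P : ℝ := ∏ i, lam i with hP
  have hPpos : 0 < P := Finset.prod_pos (fun i _ => hlam i)
  set d : ℝ := ∏ i, Real.sqrt (lam i) with hd
  have hdpos : 0 < d := Finset.prod_pos (fun i _ => Real.sqrt_pos.mpr (hlam i))
  have hd2 : d ^ 2 = P := by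
    rw [hd, hP, ← Finset.prod_pow]
    exact Finset.prod_congr rfl (fun i _ => Real.sq_sqrt (hlam i).le)
  -- the ellipsoid as a preimage of the ball
  set L : Matrix (Fin M) (Fin M) ℝ := Matrix.diagonal (fun i => Real.sqrt (lam i)) * Uᵀ
    with hLdef
  have hLvec : ∀ x : Fin M → ℝ, ∀ i, (L *ᵥ x) i = Real.sqrt (lam i) * (Uᵀ *ᵥ x) i := by
    intro x i
    rw [hLdef, ← Matrix.mulVec_mulVec, Matrix.mulVec_diagonal]
  have hLnorm : ∀ x : Fin M → ℝ, ∑ i, (L *ᵥ x) i ^ 2 = x ⬝ᵥ (Q *ᵥ x) := by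
    intro x
    rw [hpt x]
    refine Finset.sum_congr rfl (fun i _ => ?_)
    rw [hLvec x i, mul_pow, Real.sq_sqrt (hlam i).le]
  have hdetL : |L.det| = d := by
    rw [hLdef, Matrix.det_mul, Matrix.det_diagonal, abs_mul, habsdetUt, mul_one, hd]
    exact abs_of_pos (Finset.prod_pos (fun i _ => Real.sqrt_pos.mpr (hlam i)))
  have hdetL_ne : L.det ≠ 0 := by
    intro h
    rw [h, abs_zero] at hdetL
    exact hdpos.ne hdetL
  have hE : {x : Fin M → ℝ | x ⬝ᵥ (Q *ᵥ x) ≤ ρ' ^ 2} = (fun x => L *ᵥ x) ⁻¹' S M ρ' := by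
    ext x
    simp only [Set.mem_setOf_eq, Set.mem_preimage, S, hLnorm x]
  -- scaling lemmas
  have hscaleS : ∀ r : ℝ, 0 < r →
      (S M r = (fun x => (Matrix.diagonal (fun _ : Fin M => r⁻¹)) *ᵥ x) ⁻¹' S M 1) := by
    intro r hr
    ext x
    simp only [S, Set.mem_setOf_eq, Set.mem_preimage, Matrix.mulVec_diagonal]
    rw [one_pow]
    have hkey : ∑ i, (r⁻¹ * x i) ^ 2 = r⁻¹ ^ 2 * ∑ i, x i ^ 2 := by
      rw [Finset.mul_sum]; exact Finset.sum_congr rfl (fun i _ => by ring)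
    rw [hkey]
    have hr2 : (0:ℝ) < r ^ 2 := by positivity
    constructor
    · intro h
      calc r⁻¹ ^ 2 * ∑ i, x i ^ 2 ≤ r⁻¹ ^ 2 * r ^ 2 :=
            mul_le_mul_of_nonneg_left h (sq_nonneg _)
        _ = 1 := by field_simp
    · intro h
      have h2 := mul_le_mul_of_nonneg_left h hr2.le
      calc ∑ i, x i ^ 2 = r ^ 2 * (r⁻¹ ^ 2 * ∑ i, x i ^ 2) := by
            field_simp
        _ ≤ r ^ 2 * 1 := h2
        _ = r ^ 2 := mul_one _
  have hdetdiag : ∀ r : ℝ, 0 < r →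
      (Matrix.diagonal (fun _ : Fin M => r⁻¹) : Matrix (Fin M) (Fin M) ℝ).det = r⁻¹ ^ M := by
    intro r hr
    rw [Matrix.det_diagonal, Finset.prod_const, Finset.card_univ, Fintype.card_fin]
  have hV : ∀ r : ℝ, 0 < r →
      volume (S M r) = ENNReal.ofReal (r ^ M) * volume (S M 1) := by
    intro r hr
    rw [hscaleS r hr, volume_preimage_mulVec _ (by rw [hdetdiag r hr]; positivity) _]
    congr 2
    rw [hdetdiag r hr, abs_of_pos (by positivity), ← inv_pow, inv_inv]
  have hJ : ∀ r : ℝ, 0 < r →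
      (∫ x in S M r, ∑ i, x i ^ 2) = r ^ (M + 2) * ∫ x in S M 1, ∑ i, x i ^ 2 := by
    intro r hr
    have hAdet : (Matrix.diagonal (fun _ : Fin M => r⁻¹) : Matrix (Fin M) (Fin M) ℝ).det ≠ 0 := by
      rw [hdetdiag r hr]; positivity
    have key := setIntegral_comp_mulVec (Matrix.diagonal (fun _ : Fin M => r⁻¹)) hAdet
      (S M 1) (measurableSet_S 1) (fun y => ∑ i, y i ^ 2)
      continuous_sumsq.measurable
    rw [← hscaleS r hr] at key
    have hlhs : (∫ x in S M r, (fun y : Fin M → ℝ => ∑ i, y i ^ 2)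
        ((Matrix.diagonal (fun _ : Fin M => r⁻¹) : Matrix (Fin M) (Fin M) ℝ) *ᵥ x))
        = r⁻¹ ^ 2 * ∫ x in S M r, ∑ i, x i ^ 2 := by
      rw [← integral_const_mul]
      refine setIntegral_congr_fun (measurableSet_S r) (fun x _ => ?_)
      simp only [Matrix.mulVec_diagonal]
      rw [Finset.mul_sum]
      exact Finset.sum_congr rfl (fun i _ => by ring)
    rw [hlhs, hdetdiag r hr, abs_of_pos (by positivity), ← inv_pow, inv_inv] at key
    have hrne : (r:ℝ) ≠ 0 := hr.ne'
    have : (∫ x in S M r, ∑ i, x i ^ 2)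
        = r ^ 2 * (r ^ M * ∫ x in S M 1, ∑ i, x i ^ 2) := by
      have h2 : r⁻¹ ^ 2 ≠ 0 := by positivity
      field_simp at key
      linarith [key]
    rw [this, pow_add]; ring
  -- positivity and finiteness of base quantities
  have hV1_lt_top : volume (S M 1) < ⊤ := (isCompact_S 1).measure_lt_top
  have hV1_pos : 0 < volume (S M 1) := by
    have hball : Metric.ball (0 : Fin M → ℝ) (1 / M) ⊆ S M 1 := by
      intro x hx
      simp only [Metric.mem_ball, dist_zero_right] at hx
      have hxi : ∀ i, |x i| ≤ 1 / M := fun i => (norm_le_pi_norm x i).trans hx.le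
      simp only [S, Set.mem_setOf_eq, one_pow]
      have hMr : (1:ℝ) ≤ (M:ℝ) := by exact_mod_cast hM
      calc ∑ i, x i ^ 2 ≤ ∑ _i : Fin M, (1 / M : ℝ) ^ 2 := by
            refine Finset.sum_le_sum (fun i _ => ?_)
            rw [← sq_abs]
            exact pow_le_pow_left₀ (abs_nonneg _) (hxi i) 2
        _ = M * (1 / M : ℝ) ^ 2 := by
            rw [Finset.sum_const, Finset.card_univ, Fintype.card_fin, nsmul_eq_mul]
        _ ≤ 1 := by
            rw [div_pow, one_pow, mul_one_div, div_le_one (by positivity)]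
            nlinarith
    calc (0:ENNReal) < volume (Metric.ball (0 : Fin M → ℝ) (1 / M)) :=
          Metric.measure_ball_pos volume 0 (by positivity)
      _ ≤ volume (S M 1) := measure_mono hball
  set V1 : ℝ := (volume (S M 1)).toReal with hV1
  have hV1t_pos : 0 < V1 := ENNReal.toReal_pos hV1_pos.ne' hV1_lt_top.ne
  set J1 : ℝ := ∫ x in S M 1, ∑ i, x i ^ 2 with hJ1def
  have hJ1_pos : 0 < J1 := by
    rw [hJ1def]
    rw [setIntegral_pos_iff_support_of_nonneg_ae
      (Filter.Eventually.of_forall (fun x => Finset.sum_nonneg (fun i _ => sq_nonneg _)))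
      (integrableOn_S 1 continuous_sumsq)]
    have hMr : (1:ℝ) ≤ (M:ℝ) := by exact_mod_cast hM
    -- the ball around the point c = (1/(2M),...) of radius 1/(4M) lies in support ∩ S M 1
    set c : Fin M → ℝ := fun _ => 1 / (2 * M) with hcdef
    have hball : Metric.ball c (1 / (4 * M))
        ⊆ Function.support (fun x : Fin M → ℝ => ∑ i, x i ^ 2) ∩ S M 1 := by
      intro x hx
      rw [Metric.mem_ball, dist_eq_norm] at hx
      have hxi : ∀ i, |x i - 1 / (2 * M)| < 1 / (4 * M) := by
        intro i
        have h := norm_le_pi_norm (x - c) i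
        simp only [Pi.sub_apply, hcdef] at h
        calc |x i - 1 / (2 * M)| ≤ ‖x - c‖ := h
          _ < 1 / (4 * M) := hx
      have hxpos : ∀ i, 0 < x i := by
        intro i
        have h := hxi i
        rw [abs_lt] at h
        have h5 : 1 / (4 * (M:ℝ)) ≤ 1 / (2 * M) :=
          one_div_le_one_div_of_le (by positivity) (by nlinarith)
        linarith [h.1]
      constructor
      · simp only [Function.mem_support]
        have hpos : 0 < ∑ i, x i ^ 2 := by
          refine Finset.sum_pos (fun i _ => pow_pos (hxpos i) 2) ?_
          exact Finset.univ_nonempty_iff.mpr (Fin.pos_iff_nonempty.mp hM)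
        exact hpos.ne'
      · simp only [S, Set.mem_setOf_eq, one_pow]
        have hxub : ∀ i, x i ≤ 1 / M := by
          intro i
          have h := hxi i
          rw [abs_lt] at h
          have hMpos : (0:ℝ) < M := by exact_mod_cast hM
          have h4 : 1 / (2 * (M:ℝ)) + 1 / (4 * M) ≤ 1 / M := by
            have he : 1 / (2 * (M:ℝ)) + 1 / (4 * M) = 3 / 4 * (1 / M) := by
              field_simp; ring
            rw [he]
            have := one_div_pos.mpr hMpos
            linarith
          linarith [h.2]
        calc ∑ i, x i ^ 2 ≤ ∑ _i : Fin M, (1 / M : ℝ) ^ 2 := by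
              refine Finset.sum_le_sum (fun i _ => ?_)
              have := hxpos i
              nlinarith [hxub i]
          _ = M * (1 / M : ℝ) ^ 2 := by
              rw [Finset.sum_const, Finset.card_univ, Fintype.card_fin, nsmul_eq_mul]
          _ ≤ 1 := by
              rw [div_pow, one_pow, mul_one_div, div_le_one (by positivity)]
              nlinarith
    calc (0:ENNReal) < volume (Metric.ball c (1 / (4 * M))) :=
          Metric.measure_ball_pos volume c (by positivity)
      _ ≤ _ := measure_mono hball
  -- Integral over the sphere
  have hMne : (M:ℝ) ≠ 0 := Nat.cast_ne_zero.mpr hM.ne'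
  obtain ⟨i0⟩ : Nonempty (Fin M) := ⟨⟨0, hM⟩⟩
  have hsphere : (∫ x in {x : Fin M → ℝ | ∑ i, x i ^ 2 ≤ ρ ^ 2}, x ⬝ᵥ (Q *ᵥ x))
      = (∑ i, lam i) * (ρ ^ (M + 2) * J1) / M := by
    -- step 1: rotate by `Uᵀ`
    have hpre : (fun x : Fin M → ℝ => Uᵀ *ᵥ x) ⁻¹' S M ρ = S M ρ := by
      ext x
      simp only [Set.mem_preimage, S, Set.mem_setOf_eq, hnorm x]
    have hstep1 : (∫ x in {x : Fin M → ℝ | ∑ i, x i ^ 2 ≤ ρ ^ 2}, x ⬝ᵥ (Q *ᵥ x))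
        = ∫ y in S M ρ, ∑ i, lam i * y i ^ 2 := by
      have hg : Measurable (fun y : Fin M → ℝ => ∑ i, lam i * y i ^ 2) :=
        (continuous_finset_sum _
          (fun i _ => continuous_const.mul ((continuous_apply i).pow 2))).measurable
      have key := setIntegral_comp_mulVec Uᵀ hdetUt_ne (S M ρ) (measurableSet_S ρ)
        (fun y => ∑ i, lam i * y i ^ 2) hg
      rw [hpre, habsdetUt, inv_one, one_mul] at key
      rw [← key]
      exact setIntegral_congr_fun (measurableSet_S ρ) (fun x _ => hpt x)
    rw [hstep1]
    -- step 2: expand the sum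
    have hint : ∀ i : Fin M, IntegrableOn (fun y : Fin M → ℝ => lam i * y i ^ 2) (S M ρ) :=
      fun i => integrableOn_S ρ (continuous_const.mul ((continuous_apply i).pow 2))
    rw [integral_finset_sum Finset.univ (fun i _ => hint i)]
    simp_rw [integral_const_mul]
    -- step 3: all coordinate integrals agree, by a coordinate swap
    have hswap : ∀ i : Fin M, (∫ y in S M ρ, y i ^ 2) = ∫ y in S M ρ, y i0 ^ 2 := by
      intro i
      set σ : Equiv.Perm (Fin M) := Equiv.swap i i0 with hσ
      set A : Matrix (Fin M) (Fin M) ℝ := σ.permMatrix ℝ with hA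
      have hAv : ∀ (x : Fin M → ℝ) (k : Fin M), (A *ᵥ x) k = x (σ k) := by
        intro x k
        simp [hA, Matrix.mulVec, dotProduct, Equiv.Perm.permMatrix,
          PEquiv.toMatrix_apply, Equiv.toPEquiv]
      have hAdet : |A.det| = 1 := by
        rw [hA, Matrix.det_permutation]
        rcases Int.units_eq_one_or (Equiv.Perm.sign σ) with h | h <;> rw [h] <;> norm_num
      have hAdet_ne : A.det ≠ 0 := fun h => by
        rw [h, abs_zero] at hAdet; exact one_ne_zero hAdet.symm
      have hApre : (fun x : Fin M → ℝ => A *ᵥ x) ⁻¹' S M ρ = S M ρ := by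
        ext x
        simp only [Set.mem_preimage, S, Set.mem_setOf_eq]
        have hsum : ∑ k, (A *ᵥ x) k ^ 2 = ∑ k, x k ^ 2 := by
          simp_rw [hAv]
          exact Equiv.sum_comp σ (fun k => x k ^ 2)
        rw [hsum]
      have key := setIntegral_comp_mulVec A hAdet_ne (S M ρ) (measurableSet_S ρ)
        (fun y => y i0 ^ 2) ((continuous_apply i0).pow 2).measurable
      rw [hApre, hAdet, inv_one, one_mul] at key
      rw [← key]
      refine setIntegral_congr_fun (measurableSet_S ρ) (fun x _ => ?_)
      rw [hAv x i0, hσ, Equiv.swap_apply_right]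
    have hc : (M:ℝ) * ∫ y in S M ρ, y i0 ^ 2 = ρ ^ (M + 2) * J1 := by
      have h1 : ∑ i : Fin M, ∫ y in S M ρ, y i ^ 2 = ρ ^ (M + 2) * J1 := by
        rw [← integral_finset_sum Finset.univ
          (fun i _ => integrableOn_S ρ (f := fun y => y i ^ 2) ((continuous_apply i).pow 2))]
        exact hJ ρ hρ
      rw [← h1, Finset.sum_congr rfl (fun i _ => hswap i), Finset.sum_const,
        Finset.card_univ, Fintype.card_fin, nsmul_eq_mul]
    have hc2 : (∫ y in S M ρ, y i0 ^ 2) = ρ ^ (M + 2) * J1 / M := by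
      rw [eq_div_iff hMne]; linarith [hc]
    calc ∑ i, lam i * ∫ y in S M ρ, y i ^ 2
        = ∑ i, lam i * ∫ y in S M ρ, y i0 ^ 2 :=
          Finset.sum_congr rfl (fun i _ => by rw [hswap i])
      _ = (∑ i, lam i) * ∫ y in S M ρ, y i0 ^ 2 := by rw [← Finset.sum_mul]
      _ = (∑ i, lam i) * (ρ ^ (M + 2) * J1) / M := by rw [hc2]; ring
  -- Integral over the ellipsoid
  have hoval : (∫ x in {x : Fin M → ℝ | x ⬝ᵥ (Q *ᵥ x) ≤ ρ' ^ 2}, x ⬝ᵥ (Q *ᵥ x))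
      = d⁻¹ * (ρ' ^ (M + 2) * J1) := by
    have hcong : ∀ x : Fin M → ℝ, x ⬝ᵥ (Q *ᵥ x) = (fun y : Fin M → ℝ => ∑ i, y i ^ 2) (L *ᵥ x) :=
      fun x => (hLnorm x).symm
    calc (∫ x in {x : Fin M → ℝ | x ⬝ᵥ (Q *ᵥ x) ≤ ρ' ^ 2}, x ⬝ᵥ (Q *ᵥ x))
        = ∫ x in (fun x => L *ᵥ x) ⁻¹' S M ρ', (fun y : Fin M → ℝ => ∑ i, y i ^ 2) (L *ᵥ x) := by
          rw [← hE]
          exact integral_congr_ae (Filter.EventuallyEq.of_eq (funext hcong))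
      _ = |L.det|⁻¹ * ∫ y in S M ρ', ∑ i, y i ^ 2 :=
          setIntegral_comp_mulVec L hdetL_ne _ (measurableSet_S ρ')
            _ continuous_sumsq.measurable
      _ = d⁻¹ * (ρ' ^ (M + 2) * J1) := by rw [hdetL, hJ ρ' hρ']
  -- Volume identities
  have hVsphere : volume {x : Fin M → ℝ | ∑ i, x i ^ 2 ≤ ρ ^ 2}
      = ENNReal.ofReal (ρ ^ M) * volume (S M 1) := hV ρ hρ
  have hVoval : volume {x : Fin M → ℝ | x ⬝ᵥ (Q *ᵥ x) ≤ ρ' ^ 2}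
      = ENNReal.ofReal d⁻¹ * (ENNReal.ofReal (ρ' ^ M) * volume (S M 1)) := by
    rw [hE, volume_preimage_mulVec L hdetL_ne, hdetL, hV ρ' hρ']
  -- volume equation in the reals
  have hvolR : ρ ^ M = d⁻¹ * ρ' ^ M := by
    have h1 := hvol
    rw [hVsphere, hVoval, ← mul_assoc, ← ENNReal.ofReal_mul (by positivity)] at h1
    have h2 := congrArg ENNReal.toReal h1
    rw [ENNReal.toReal_mul, ENNReal.toReal_mul, ENNReal.toReal_ofReal (by positivity),
      ENNReal.toReal_ofReal (by positivity)] at h2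
    exact mul_right_cancel₀ hV1t_pos.ne' h2
  -- the ratio of radii
  set G : ℝ := P ^ ((1:ℝ)/M) with hGdef
  have hGpos : 0 < G := Real.rpow_pos_of_pos hPpos _
  have h1 : (ρ/ρ')^M = d⁻¹ := by
    rw [div_pow, hvolR]
    field_simp
  have ht : ((ρ/ρ')^2) ^ M = P⁻¹ := by
    calc ((ρ/ρ')^2)^M = ((ρ/ρ')^M)^2 := by rw [← pow_mul, ← pow_mul, mul_comm]
      _ = (d⁻¹)^2 := by rw [h1]
      _ = P⁻¹ := by rw [← hd2, inv_pow]
  have hratio : ρ ^ 2 / ρ' ^ 2 = G⁻¹ := by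
    have htnn : (0:ℝ) ≤ (ρ/ρ')^2 := sq_nonneg _
    have h2 : ((ρ/ρ')^2 : ℝ) = (P⁻¹) ^ ((1:ℝ)/M) := by
      rw [← ht, ← Real.rpow_natCast ((ρ/ρ')^2) M, ← Real.rpow_mul htnn]
      rw [mul_one_div, div_self hMne, Real.rpow_one]
    rw [div_pow] at h2
    rw [h2, Real.inv_rpow hPpos.le, hGdef]
  -- real forms of the volumes
  have hVsR : (volume {x : Fin M → ℝ | ∑ i, x i ^ 2 ≤ ρ ^ 2}).toReal = ρ ^ M * V1 := by
    rw [hVsphere, ENNReal.toReal_mul, ENNReal.toReal_ofReal (by positivity)]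
  have hVoR : (volume {x : Fin M → ℝ | x ⬝ᵥ (Q *ᵥ x) ≤ ρ' ^ 2}).toReal
      = d⁻¹ * (ρ' ^ M * V1) := by
    rw [hVoval, ENNReal.toReal_mul, ENNReal.toReal_mul,
      ENNReal.toReal_ofReal (by positivity), ENNReal.toReal_ofReal (by positivity)]
  rw [hVsR, hVoR, hsphere, hoval]
  have key : ((ρ ^ M * V1)⁻¹ * ((∑ i, lam i) * (ρ ^ (M + 2) * J1) / M)) /
      ((d⁻¹ * (ρ' ^ M * V1))⁻¹ * (d⁻¹ * (ρ' ^ (M + 2) * J1)))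
      = ((∑ i, lam i) / M) * (ρ ^ 2 / ρ' ^ 2) := by
    rw [pow_add, pow_add]
    field_simp
  rw [key, hratio, ← div_eq_mul_inv]
end
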